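/- Define F : (0,1) → ℝ by F(R) = ( −5 − 5R⁴ − 14R² + (1+R²)·√(25 + 94R² + 25R⁴) ) / (2 − 2R²). Then for every R ∈ (0,1), F(R) ≤ F(R₀) where R₀ = √(7 − √33)/2. -/
import Mathlib


/-- The threshold value of `s = ‖x‖²` below which the spherical-Hessian condition
holds for the sphere of radius `R`. -/
noncomputable def threshold (R : ℝ) : ℝ :=
  (-5 - 5 * R ^ 4 - 14 * R ^ 2 +
      (1 + R ^ 2) * Real.sqrt (25 + 94 * R ^ 2 + 25 * R ^ 4)) /
    (2 - 2 * R ^ 2)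

set_option maxHeartbeats 1000000 in
theorem threshold_maximized_at_R₀ :
    ∀ R ∈ Set.Ioo (0 : ℝ) 1,
      threshold R ≤ threshold (Real.sqrt (7 - Real.sqrt 33) / 2) := by
  intro R hR
  obtain ⟨hR0, hR1⟩ := hR
  set s : ℝ := Real.sqrt 33 with hs_def
  have hs0 : 0 ≤ s := Real.sqrt_nonneg 33
  have hs2 : s ^ 2 = 33 := Real.sq_sqrt (by norm_num)
  have hs_lb : 5.7 < s := by nlinarith
  have hs_ub : s < 5.75 := by nlinarith
  set M : ℝ := 23 - 4 * s with hM_def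
  have hM_pos : 0 < M := by rw [hM_def]; linarith
  have hM2 : M ^ 2 = 46 * M - 1 := by rw [hM_def]; linear_combination 16 * hs2
  -- value at R₀
  set R₀ : ℝ := Real.sqrt (7 - s) / 2 with hR₀_def
  have h7s : (0 : ℝ) ≤ 7 - s := by linarith
  have ht0 : R₀ ^ 2 = (7 - s) / 4 := by
    rw [hR₀_def, div_pow, Real.sq_sqrt h7s]; norm_num
  have ht0' : R₀ ^ 4 = ((7 - s) / 4) ^ 2 := by
    rw [show R₀ ^ 4 = (R₀ ^ 2) ^ 2 by ring, ht0]
  have harg0 : 25 + 94 * R₀ ^ 2 + 25 * R₀ ^ 4 = (11 * (s - 3) / 4) ^ 2 := by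
    rw [ht0, ht0']; linear_combination (-6 : ℝ) * hs2
  have hsq0 : Real.sqrt (25 + 94 * R₀ ^ 2 + 25 * R₀ ^ 4) = 11 * (s - 3) / 4 := by
    rw [harg0, Real.sqrt_sq (by nlinarith)]
  have hden0 : (2 : ℝ) - 2 * R₀ ^ 2 ≠ 0 := by rw [ht0]; nlinarith
  have hval : threshold R₀ = M := by
    unfold threshold
    rw [hsq0, div_eq_iff hden0, ht0, ht0', hM_def]
    linear_combination hs2
  -- bound for general R
  rw [hval]
  set t : ℝ := R ^ 2 with ht_def
  have ht_pos : 0 < t := by positivity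
  have ht1 : t < 1 := by
    rw [ht_def]; nlinarith
  have hR4 : R ^ 4 = t ^ 2 := by rw [ht_def]; ring
  have harg_nn : (0 : ℝ) ≤ 25 + 94 * R ^ 2 + 25 * R ^ 4 := by rw [← ht_def, hR4]; nlinarith
  set v : ℝ := Real.sqrt (25 + 94 * R ^ 2 + 25 * R ^ 4) with hv_def
  have hv0 : 0 ≤ v := Real.sqrt_nonneg _
  have hv2 : v ^ 2 = 25 + 94 * t + 25 * t ^ 2 := by
    rw [hv_def, Real.sq_sqrt harg_nn, ← ht_def, hR4]
  set W : ℝ := 5 + 5 * t ^ 2 + 14 * t + 2 * M * (1 - t) with hW_def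
  have hW0 : 0 ≤ W := by
    rw [hW_def]; nlinarith
  have hkey : (5 * M + 1) * (W ^ 2 - (1 + t) ^ 2 * (25 + 94 * t + 25 * t ^ 2)) =
      4 * (1 - t) * ((5 * M + 1) * t - 16 * M) ^ 2 := by
    rw [hW_def]
    linear_combination (-4 * (1 - t) * ((5 * M + 1) * t - 5 * M)) * hM2
  have h5M : (0 : ℝ) < 5 * M + 1 := by linarith
  have hprod : 0 ≤ 4 * (1 - t) * ((5 * M + 1) * t - 16 * M) ^ 2 :=
    mul_nonneg (by linarith) (sq_nonneg _)
  have hsqle : (1 + t) ^ 2 * (25 + 94 * t + 25 * t ^ 2) ≤ W ^ 2 := by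
    have h := (mul_nonneg_iff_of_pos_left h5M).mp (hkey ▸ hprod)
    linarith
  have hvW : (1 + t) * v ≤ W := by
    have h1 : ((1 + t) * v) ^ 2 ≤ W ^ 2 := by
      calc ((1 + t) * v) ^ 2 = (1 + t) ^ 2 * (25 + 94 * t + 25 * t ^ 2) := by
            rw [mul_pow, hv2]
        _ ≤ W ^ 2 := hsqle
    calc (1 + t) * v = Real.sqrt (((1 + t) * v) ^ 2) :=
          (Real.sqrt_sq (by positivity)).symm
      _ ≤ Real.sqrt (W ^ 2) := Real.sqrt_le_sqrt h1
      _ = W := Real.sqrt_sq hW0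
  have hden : (0 : ℝ) < 2 - 2 * R ^ 2 := by rw [← ht_def]; linarith
  unfold threshold
  rw [div_le_iff₀ hden, ← hv_def, ← ht_def, hR4]
  nlinarith [hvW]
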